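/- Let Q be a bounded measurable subset of ℝ^m of finite Lebesgue measure, let E be a finite-dimensional real normed space, and let φ : Q × E → ℝ be a Carathéodory function (measurable in z ∈ Q, continuous in λ ∈ E) with φ ≥ 0. Let (Fⁿ) be a sequence of measurable functions Fⁿ : Q → E such that sup_n ∫_Q φ(z, Fⁿ(z)) dz < ∞. Let ν = (ν_z)_{z∈Q} be a measurable family of Borel probability measures on E such that for every bounded Carathéodory function h : Q × E → ℝ one has h(·, Fⁿ(·)) → (z ↦ ∫_E h(z,λ) dν_z(λ)) weak-* in L^∞(Q), i.e. ∫_Q h(z,Fⁿ(z)) ψ(z) dz → ∫_Q (∫_E h(z,λ) dν_z(λ)) ψ(z) dz for every ψ ∈ L¹(Q). Define the (possibly infinite) function z ↦ ∫_E φ(z,λ) dν_z(λ) as the monotone increasing limit, as R → ∞, of z ↦ ∫_E min(φ(z,λ), R) dν_z(λ). Then z ↦ ∫_E φ(z,λ) dν_z(λ) belongs to L¹(Q), and there exist a subsequence (Fⁿᵏ) and a finite positive Borel measure μ on the closure of Q such that for every continuous function ψ on the closure of Q: ∫_Q φ(z, Fⁿᵏ(z)) ψ(z) dz → ∫_Q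 (∫_E φ(z,λ) dν_z(λ)) ψ(z) dz + ∫ ψ dμ. -/

import Mathlib

open MeasureTheory
open scoped ENNReal
namespace YMRaux
set_option linter.unusedSectionVars false

lemma exists_chunk (b : ℕ → ℝ) :
    ∀ (n : ℕ) (t : ℝ), 0 ≤ t → t < ∑ i ∈ Finset.range n, b i →
    ∃ k < n, (∑ i ∈ Finset.range k, b i) ≤ t ∧ t < (∑ i ∈ Finset.range k, b i) + b k := by
  intro n
  induction n with
  | zero => intro t h0 h; simp at h; linarith
  | succ n ih =>
    intro t h0 h
    by_cases hc : t < ∑ i ∈ Finset.range n, b i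
    · obtain ⟨k, hk, h1, h2⟩ := ih t h0 hc
      exact ⟨k, Nat.lt_succ_of_lt hk, h1, h2⟩
    · push_neg at hc
      refine ⟨n, Nat.lt_succ_self n, hc, ?_⟩
      rwa [Finset.sum_range_succ] at h
section family
variable {D β : Type*} [Fintype D] (B : List D → Set β)

lemma level_subset (hsub : ∀ (d : D) w, B (d::w) ⊆ B w) :
    ∀ w : List D, B w ⊆ B [] := by
  intro w; induction w with
  | nil => exact subset_rfl
  | cons d w ih => exact (hsub d w).trans ih

lemma level_disjoint
    (hsub : ∀ (d : D) w, B (d::w) ⊆ B w)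
    (hdisj : ∀ w (d d' : D), d ≠ d' → Disjoint (B (d::w)) (B (d'::w))) :
    ∀ (j : ℕ) (w w' : List D), w.length = j → w'.length = j → w ≠ w' →
      Disjoint (B w) (B w') := by
  intro j
  induction j with
  | zero =>
    intro w w' hw hw' hne
    rw [List.length_eq_zero_iff] at hw hw'
    exact absurd (hw.trans hw'.symm) hne
  | succ j ih =>
    intro w w' hw hw' hne
    match w, w' with
    | d :: u, d' :: u' =>
      simp only [List.length_cons, Nat.succ.injEq] at hw hw'
      by_cases hu : u = u'
      · subst hu
        have hd : d ≠ d' := fun h => hne (by rw [h])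
        exact hdisj u d d' hd
      · exact ((ih u u' hw hw' hu).mono (hsub d u) (hsub d' u'))

lemma level_cover (hcover : ∀ w, B w ⊆ ⋃ d, B (d::w)) :
    ∀ j : ℕ, B [] ⊆ ⋃ v : Fin j → D, B (List.ofFn v) := by
  intro j
  induction j with
  | zero =>
    intro x hx
    exact Set.mem_iUnion.mpr ⟨fun i => i.elim0, by simpa [List.ofFn_zero] using hx⟩
  | succ j ih =>
    intro x hx
    obtain ⟨v, hv⟩ := Set.mem_iUnion.mp (ih hx)
    obtain ⟨d, hd⟩ := Set.mem_iUnion.mp (hcover _ hv)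
    refine Set.mem_iUnion.mpr ⟨Fin.cons d v, ?_⟩
    have : List.ofFn (Fin.cons d v : Fin (j+1) → D) = d :: List.ofFn v := by
      simp [List.ofFn_succ]
    rwa [this]

lemma level_union (hsub : ∀ (d : D) w, B (d::w) ⊆ B w)
    (hcover : ∀ w, B w ⊆ ⋃ d, B (d::w)) (j : ℕ) :
    ⋃ v : Fin j → D, B (List.ofFn v) = B [] := by
  apply Set.Subset.antisymm
  · exact Set.iUnion_subset fun v => level_subset B hsub _
  · exact level_cover B hcover j

end family


section intervals
variable {D : Type*} [Fintype D] [Nonempty D] [DecidableEq D]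

/-- auxiliary enumeration of child masses -/
noncomputable def bfun (a : List D → ℝ) (w : List D) (i : ℕ) : ℝ :=
  if h : i < Fintype.card D then a ((Fintype.equivFin D).symm ⟨i, h⟩ :: w) else 0

/-- left endpoint of the interval of a word -/
noncomputable def lep (a : List D → ℝ) : List D → ℝ
  | [] => 0
  | d :: w => lep a w + ∑ i ∈ Finset.range (Fintype.equivFin D d : ℕ), bfun a w i

/-- the interval of a word -/
noncomputable def ivl (a : List D → ℝ) (w : List D) : Set ℝ :=
  Set.Ico (lep a w) (lep a w + a w)

variable {a : List D → ℝ}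

lemma bfun_nonneg (ha0 : ∀ w, 0 ≤ a w) (w : List D) (i : ℕ) : 0 ≤ bfun a w i := by
  unfold bfun; split <;> simp [ha0]

lemma bfun_apply (w : List D) (d : D) :
    bfun a w (Fintype.equivFin D d : ℕ) = a (d :: w) := by
  unfold bfun
  rw [dif_pos (Fintype.equivFin D d).isLt]
  simp

lemma sum_bfun (hacons : ∀ w, a w = ∑ d, a (d :: w)) (w : List D) :
    ∑ i ∈ Finset.range (Fintype.card D), bfun a w i = a w := by
  rw [← Fin.sum_univ_eq_sum_range (fun i => bfun a w i) (Fintype.card D)]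
  rw [hacons w]
  rw [← Equiv.sum_comp (Fintype.equivFin D).symm (fun d => a (d :: w))]
  apply Finset.sum_congr rfl
  intro i _
  unfold bfun
  rw [dif_pos i.isLt]

lemma ivl_cons_subset (ha0 : ∀ w, 0 ≤ a w) (hacons : ∀ w, a w = ∑ d, a (d :: w))
    (d : D) (w : List D) : ivl a (d :: w) ⊆ ivl a w := by
  have hle : lep a w ≤ lep a (d :: w) := by
    simp only [lep, le_add_iff_nonneg_right]
    exact Finset.sum_nonneg fun i _ => bfun_nonneg ha0 w i
  have hup : lep a (d :: w) + a (d :: w) ≤ lep a w + a w := by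
    simp only [lep]
    rw [add_assoc, add_le_add_iff_left, ← bfun_apply (a := a) w d, ← Finset.sum_range_succ]
    rw [← sum_bfun hacons w]
    exact Finset.sum_le_sum_of_subset_of_nonneg
      (Finset.range_subset_range.mpr (Fintype.equivFin D d).isLt)
      (fun i _ _ => bfun_nonneg ha0 w i)
  intro t ht
  exact ⟨hle.trans ht.1, lt_of_lt_of_le ht.2 hup⟩

lemma ivl_cons_disjoint (ha0 : ∀ w, 0 ≤ a w) (w : List D) {d d' : D} (hne : d ≠ d') :
    Disjoint (ivl a (d :: w)) (ivl a (d' :: w)) := by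
  have key : ∀ e e' : D, (Fintype.equivFin D e : ℕ) < (Fintype.equivFin D e' : ℕ) →
      lep a (e :: w) + a (e :: w) ≤ lep a (e' :: w) := by
    intro e e' hlt
    simp only [lep]
    rw [add_assoc, add_le_add_iff_left, ← bfun_apply (a := a) w e, ← Finset.sum_range_succ]
    exact Finset.sum_le_sum_of_subset_of_nonneg
      (Finset.range_subset_range.mpr hlt)
      (fun i _ _ => bfun_nonneg ha0 w i)
  have hne' : (Fintype.equivFin D d : ℕ) ≠ (Fintype.equivFin D d' : ℕ) := by
    intro h
    exact hne ((Fintype.equivFin D).injective (Fin.val_injective h))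
  rw [Set.disjoint_left]
  intro t ht ht'
  rcases lt_or_gt_of_ne hne' with h | h
  · exact absurd ht'.1 (not_le.mpr (lt_of_lt_of_le ht.2 (key d d' h)))
  · exact absurd ht.1 (not_le.mpr (lt_of_lt_of_le ht'.2 (key d' d h)))

lemma ivl_cons_cover (ha0 : ∀ w, 0 ≤ a w) (hacons : ∀ w, a w = ∑ d, a (d :: w))
    (w : List D) : ivl a w ⊆ ⋃ d, ivl a (d :: w) := by
  intro t ht
  obtain ⟨ht1, ht2⟩ := ht
  have h0 : 0 ≤ t - lep a w := by linarith
  have h1 : t - lep a w < ∑ i ∈ Finset.range (Fintype.card D), bfun a w i := by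
    rw [sum_bfun hacons w]; linarith
  obtain ⟨k, hk, hk1, hk2⟩ := exists_chunk (bfun a w) (Fintype.card D) (t - lep a w) h0 h1
  refine Set.mem_iUnion.mpr ⟨(Fintype.equivFin D).symm ⟨k, hk⟩, ?_⟩
  have he : (Fintype.equivFin D ((Fintype.equivFin D).symm ⟨k, hk⟩) : ℕ) = k := by
    simp
  have hb : bfun a w k = a ((Fintype.equivFin D).symm ⟨k, hk⟩ :: w) := by
    unfold bfun; rw [dif_pos hk]
  constructor
  · simp only [lep, he]; linarith
  · simp only [lep, he]; rw [← hb]; linarith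

open Classical in
noncomputable def digit (a : List D → ℝ) (w : List D) (t : ℝ) : D :=
  if h : ∃ d, t ∈ ivl a (d :: w) then h.choose else Classical.arbitrary D

lemma digit_spec (ha0 : ∀ w, 0 ≤ a w) {w : List D} {t : ℝ} {d : D}
    (ht : t ∈ ivl a (d :: w)) : digit a w t = d := by
  classical
  have h : ∃ d, t ∈ ivl a (d :: w) := ⟨d, ht⟩
  rw [digit, dif_pos h]
  by_contra hne
  exact Set.disjoint_left.mp (ivl_cons_disjoint ha0 w hne) h.choose_spec ht

noncomputable def branch (a : List D → ℝ) (t : ℝ) : ℕ → List D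
  | 0 => []
  | j + 1 => digit a (branch a t j) t :: branch a t j

lemma branch_length (a : List D → ℝ) (t : ℝ) (j : ℕ) : (branch a t j).length = j := by
  induction j with
  | zero => rfl
  | succ j ih => simp [branch, ih]

lemma branch_mem (ha0 : ∀ w, 0 ≤ a w) (hacons : ∀ w, a w = ∑ d, a (d :: w))
    {t : ℝ} (ht : t ∈ ivl a []) (j : ℕ) : t ∈ ivl a (branch a t j) := by
  induction j with
  | zero => exact ht
  | succ j ih =>
    obtain ⟨d, hd⟩ := Set.mem_iUnion.mp (ivl_cons_cover ha0 hacons _ ih)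
    have : digit a (branch a t j) t = d := digit_spec ha0 hd
    simp only [branch, this]
    exact hd

lemma branch_eq_of_mem (ha0 : ∀ w, 0 ≤ a w) (hacons : ∀ w, a w = ∑ d, a (d :: w))
    {t : ℝ} : ∀ {w : List D}, t ∈ ivl a w → branch a t w.length = w := by
  intro w
  induction w with
  | nil => intro _; rfl
  | cons d w ih =>
    intro ht
    have hw : t ∈ ivl a w := ivl_cons_subset ha0 hacons d w ht
    have := ih hw
    simp only [List.length_cons, branch, this]
    rw [digit_spec ha0 ht]

lemma measurableSet_ivl (a : List D → ℝ) (w : List D) : MeasurableSet (ivl a w) :=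
  measurableSet_Ico

lemma measurableSet_digit_eq (ha0 : ∀ w, 0 ≤ a w) (w : List D) (d : D) :
    MeasurableSet {t : ℝ | digit a w t = d} := by
  classical
  have hset : {t : ℝ | digit a w t = d} =
      ivl a (d :: w) ∪
      ((⋂ d', (ivl a (d' :: w))ᶜ) ∩ {t : ℝ | d = Classical.arbitrary D}) := by
    ext t
    simp only [Set.mem_setOf_eq, Set.mem_union, Set.mem_inter_iff, Set.mem_iInter,
      Set.mem_compl_iff]
    constructor
    · intro h
      by_cases he : ∃ d', t ∈ ivl a (d' :: w)
      · obtain ⟨d', hd'⟩ := he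
        left
        rw [digit_spec ha0 hd'] at h
        rwa [h] at hd'
      · right
        push_neg at he
        rw [digit, dif_neg (by push_neg; exact he)] at h
        exact ⟨he, h.symm⟩
    · rintro (h | ⟨h1, h2⟩)
      · exact digit_spec ha0 h
      · rw [digit, dif_neg (by push_neg; exact h1)]
        exact h2.symm
  rw [hset]
  refine (measurableSet_ivl a _).union
    ((MeasurableSet.iInter fun d' => (measurableSet_ivl a _).compl).inter ?_)
  exact MeasurableSet.const _

lemma measurableSet_branch_eq (ha0 : ∀ w, 0 ≤ a w) (j : ℕ) (w : List D) :
    MeasurableSet {t : ℝ | branch a t j = w} := by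
  induction j generalizing w with
  | zero =>
    by_cases hw : w = []
    · subst hw; simp only [branch]; simp
    · have : {t : ℝ | branch a t 0 = w} = ∅ := by
        ext t; simp [branch, Ne.symm hw]
      rw [this]; exact MeasurableSet.empty
  | succ j ih =>
    match w with
    | [] =>
      have : {t : ℝ | branch a t (j+1) = []} = ∅ := by
        ext t; simp [branch]
      rw [this]; exact MeasurableSet.empty
    | d :: w' =>
      have : {t : ℝ | branch a t (j+1) = d :: w'} =
          {t : ℝ | branch a t j = w'} ∩ {t : ℝ | digit a w' t = d} := by
        ext t
        simp only [Set.mem_setOf_eq, Set.mem_inter_iff, branch, List.cons.injEq]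
        constructor
        · rintro ⟨h1, h2⟩
          exact ⟨h2, by rw [h2] at h1; exact h1⟩
        · rintro ⟨h1, h2⟩
          exact ⟨by rw [h1]; exact h2, h1⟩
      rw [this]
      exact (ih w').inter (measurableSet_digit_eq ha0 w' d)

lemma volume_ivl (ha0 : ∀ w, 0 ≤ a w) (w : List D) :
    volume (ivl a w) = ENNReal.ofReal (a w) := by
  rw [ivl, Real.volume_Ico, add_sub_cancel_left]

end intervals

variable {m : ℕ}

noncomputable def sd (S : ℝ) (j : ℕ) : ℝ := 2 * S / 2 ^ j

lemma sd_pos {S : ℝ} (hS : 0 < S) (j : ℕ) : 0 < sd S j := by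
  unfold sd; positivity

lemma sd_nonneg {S : ℝ} (hS : 0 ≤ S) (j : ℕ) : 0 ≤ sd S j := by
  unfold sd; positivity

lemma sd_succ (S : ℝ) (j : ℕ) : sd S (j+1) = sd S j / 2 := by
  unfold sd; rw [pow_succ]; ring

lemma sd_eq (S : ℝ) (j : ℕ) : sd S j = 2 * S * (1/2) ^ j := by
  unfold sd; rw [one_div, inv_pow]; ring

lemma half_sd (S : ℝ) (j : ℕ) : S / 2 ^ j = sd S (j+1) := by
  unfold sd; rw [pow_succ]; ring

noncomputable def corner (S : ℝ) : List (Fin m → Bool) → (Fin m → ℝ)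
  | [] => fun _ => -S
  | d :: w => fun i => corner S w i + (if d i then S / 2 ^ w.length else 0)

def cube (S : ℝ) (w : List (Fin m → Bool)) : Set (EuclideanSpace ℝ (Fin m)) :=
  {x | ∀ i, corner S w i ≤ x i ∧ x i < corner S w i + sd S w.length}


lemma cube_cons_subset {S : ℝ} (hS : 0 ≤ S) (d : Fin m → Bool) (w : List (Fin m → Bool)) :
    cube S (d :: w) ⊆ cube S w := by
  intro x hx i
  obtain ⟨h1, h2⟩ := hx i
  simp only [corner, List.length_cons] at h1 h2 ⊢
  have hh : 0 ≤ S / 2 ^ w.length := by positivity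
  have hsum : S / 2 ^ w.length + S / 2 ^ w.length = sd S w.length := by
    unfold sd; ring
  have hsd1 : sd S (w.length + 1) = S / 2 ^ w.length := (half_sd S w.length).symm
  rw [hsd1] at h2
  by_cases hd : d i
  · rw [if_pos hd] at h1 h2; exact ⟨by linarith, by linarith⟩
  · rw [if_neg hd] at h1 h2; exact ⟨by linarith, by linarith⟩

lemma cube_cons_cover {S : ℝ} (w : List (Fin m → Bool)) :
    cube S w ⊆ ⋃ d, cube S (d :: w) := by
  intro x hx
  refine Set.mem_iUnion.mpr ⟨fun i => decide (corner S w i + S / 2 ^ w.length ≤ x i), fun i => ?_⟩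
  obtain ⟨h1, h2⟩ := hx i
  simp only [corner, List.length_cons, decide_eq_true_eq]
  have hsum : S / 2 ^ w.length + S / 2 ^ w.length = sd S w.length := by
    unfold sd; ring
  have hsd1 : sd S (w.length + 1) = S / 2 ^ w.length := (half_sd S w.length).symm
  rw [hsd1]
  by_cases hc : corner S w i + S / 2 ^ w.length ≤ x i
  · rw [if_pos hc]; exact ⟨by linarith, by linarith⟩
  · rw [if_neg hc]; push_neg at hc; exact ⟨by linarith, by linarith⟩

lemma cube_cons_disjoint {S : ℝ} (w : List (Fin m → Bool)) {d d' : Fin m → Bool}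
    (hne : d ≠ d') : Disjoint (cube S (d :: w)) (cube S (d' :: w)) := by
  rw [Set.disjoint_left]
  intro x hx hx'
  obtain ⟨i, hi⟩ : ∃ i, d i ≠ d' i := by
    by_contra h; push_neg at h; exact hne (funext h)
  obtain ⟨h1, h2⟩ := hx i
  obtain ⟨h1', h2'⟩ := hx' i
  simp only [corner, List.length_cons] at h1 h2 h1' h2'
  have hsd1 : sd S (w.length + 1) = S / 2 ^ w.length := (half_sd S w.length).symm
  rw [hsd1] at h2 h2'
  cases hd : d i <;> cases hd' : d' i <;> rw [hd] at h1 h2 hi <;> rw [hd'] at h1' h2' hi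
  · exact hi rfl
  · simp only [if_neg Bool.false_ne_true, if_pos rfl] at *
    simp at h1 h2 h1' h2'
    linarith
  · simp at h1 h2 h1' h2'
    linarith
  · exact hi rfl

lemma corner_mem_cube {S : ℝ} (hS : 0 < S) (w : List (Fin m → Bool)) :
    (WithLp.equiv 2 (Fin m → ℝ)).symm (corner S w) ∈ cube S w := by
  intro i
  change corner S w i ≤ corner S w i ∧ corner S w i < corner S w i + sd S w.length
  exact ⟨le_refl _, by linarith [sd_pos hS w.length]⟩

lemma coord_continuous (i : Fin m) : Continuous fun x : EuclideanSpace ℝ (Fin m) => x i :=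
  (continuous_apply i).comp (PiLp.continuous_ofLp 2 _)

lemma measurableSet_cube (S : ℝ) (w : List (Fin m → Bool)) : MeasurableSet (cube S w) := by
  have : cube S w = ⋂ i, (fun x : EuclideanSpace ℝ (Fin m) => x i) ⁻¹'
      (Set.Ico (corner S w i) (corner S w i + sd S w.length)) := by
    ext x; simp [cube, Set.mem_iInter, Set.mem_Ico]
  rw [this]
  exact MeasurableSet.iInter fun i =>
    (coord_continuous i).measurable measurableSet_Ico

lemma dist_le_of_mem_cube {S : ℝ} (hS : 0 ≤ S) {w : List (Fin m → Bool)}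
    {x y : EuclideanSpace ℝ (Fin m)} (hx : x ∈ cube S w) (hy : y ∈ cube S w) :
    dist x y ≤ Real.sqrt m * sd S w.length := by
  have hsd : 0 ≤ sd S w.length := sd_nonneg hS _
  rw [EuclideanSpace.dist_eq]
  have hbound : ∀ i : Fin m, dist (x i) (y i) ^ 2 ≤ sd S w.length ^ 2 := by
    intro i
    obtain ⟨h1, h2⟩ := hx i
    obtain ⟨h1', h2'⟩ := hy i
    have : |x i - y i| ≤ sd S w.length := by
      rw [abs_sub_le_iff]; exact ⟨by linarith, by linarith⟩
    rw [Real.dist_eq]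
    exact pow_le_pow_left₀ (abs_nonneg _) this 2
  calc Real.sqrt (∑ i, dist (x i) (y i) ^ 2)
      ≤ Real.sqrt (∑ _i : Fin m, sd S w.length ^ 2) :=
        Real.sqrt_le_sqrt (Finset.sum_le_sum fun i _ => hbound i)
    _ = Real.sqrt (m * sd S w.length ^ 2) := by
        rw [Finset.sum_const, Finset.card_univ, Fintype.card_fin, nsmul_eq_mul]
    _ = Real.sqrt m * sd S w.length := by
        rw [Real.sqrt_mul (Nat.cast_nonneg m), Real.sqrt_sq hsd]


section glimsec
open Filter
variable {m : ℕ}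

noncomputable def gj (S : ℝ) (a : List (Fin m → Bool) → ℝ) (j : ℕ) (t : ℝ) :
    EuclideanSpace ℝ (Fin m) :=
  (WithLp.equiv 2 (Fin m → ℝ)).symm (corner S (branch a t j))

lemma gj_mem {S : ℝ} (hS : 0 < S) (a : List (Fin m → Bool) → ℝ) (j : ℕ) (t : ℝ) :
    gj S a j t ∈ cube S (branch a t j) := corner_mem_cube hS _

lemma cube_branch_antitone {S : ℝ} (hS : 0 ≤ S) (a : List (Fin m → Bool) → ℝ) (t : ℝ)
    {j j' : ℕ} (h : j ≤ j') : cube S (branch a t j') ⊆ cube S (branch a t j) := by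
  induction j' with
  | zero => rw [Nat.le_zero.mp h]
  | succ j' ih =>
    rcases Nat.lt_or_ge j (j'+1) with hlt | hge
    · have h1 : cube S (branch a t (j'+1)) ⊆ cube S (branch a t j') :=
        cube_cons_subset hS _ _
      exact h1.trans (ih (Nat.lt_succ_iff.mp hlt))
    · rw [Nat.le_antisymm h hge]

lemma gj_dist {S : ℝ} (hS : 0 < S) (a : List (Fin m → Bool) → ℝ) (t : ℝ)
    {j j' : ℕ} (h : j ≤ j') :
    dist (gj S a j t) (gj S a j' t) ≤ Real.sqrt m * sd S j := by
  have h1 : gj S a j' t ∈ cube S (branch a t j) :=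
    cube_branch_antitone hS.le a t h (gj_mem hS a j' t)
  have h2 := dist_le_of_mem_cube hS.le (gj_mem hS a j t) h1
  rwa [branch_length] at h2

lemma gj_cauchy {S : ℝ} (hS : 0 < S) (a : List (Fin m → Bool) → ℝ) (t : ℝ) :
    CauchySeq (fun j => gj S a j t) := by
  apply cauchySeq_of_le_geometric (1/2) (Real.sqrt m * (2 * S)) (by norm_num)
  intro j
  have := gj_dist hS a t (Nat.le_succ j)
  rw [sd_eq] at this
  calc dist (gj S a j t) (gj S a (j+1) t) ≤ Real.sqrt m * (2 * S * (1/2)^j) := this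
    _ = Real.sqrt m * (2 * S) * (1/2)^j := by ring

noncomputable def glim (S : ℝ) (a : List (Fin m → Bool) → ℝ) (t : ℝ) :
    EuclideanSpace ℝ (Fin m) :=
  limUnder atTop (fun j => gj S a j t)

lemma glim_tendsto {S : ℝ} (hS : 0 < S) (a : List (Fin m → Bool) → ℝ) (t : ℝ) :
    Tendsto (fun j => gj S a j t) atTop (nhds (glim S a t)) := by
  obtain ⟨x, hx⟩ := cauchySeq_tendsto_of_complete (gj_cauchy hS a t)
  rwa [glim, hx.limUnder_eq]

lemma glim_dist {S : ℝ} (hS : 0 < S) (a : List (Fin m → Bool) → ℝ) (t : ℝ) (j : ℕ) :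
    dist (gj S a j t) (glim S a t) ≤ Real.sqrt m * sd S j := by
  have h1 : Tendsto (fun j' => dist (gj S a j t) (gj S a j' t)) atTop
      (nhds (dist (gj S a j t) (glim S a t))) :=
    (tendsto_const_nhds.dist (glim_tendsto hS a t))
  refine le_of_tendsto h1 ?_
  filter_upwards [eventually_ge_atTop j] with j' hj'
  exact gj_dist hS a t hj'

lemma gj_measurable {S : ℝ} {a : List (Fin m → Bool) → ℝ} (ha0 : ∀ w, 0 ≤ a w) (j : ℕ) :
    Measurable (fun t => gj S a j t) := by
  letI : MeasurableSpace (List (Fin m → Bool)) := ⊤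
  have hb : Measurable (fun t => branch a t j) := by
    apply measurable_to_countable'
    intro w
    have : (fun t => branch a t j) ⁻¹' {w} = {t : ℝ | branch a t j = w} := by
      ext t; simp
    rw [this]
    exact measurableSet_branch_eq ha0 j w
  exact Measurable.comp (g := fun w : List (Fin m → Bool) =>
    (WithLp.equiv 2 (Fin m → ℝ)).symm (corner S w)) measurable_from_top hb

lemma glim_measurable {S : ℝ} (hS : 0 < S) {a : List (Fin m → Bool) → ℝ}
    (ha0 : ∀ w, 0 ≤ a w) : Measurable (glim S a) := by
  apply measurable_of_tendsto_metrizable (fun j => gj_measurable ha0 j)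
  rw [tendsto_pi_nhds]
  exact fun t => glim_tendsto hS a t

lemma norm_le_of_mem_root {S : ℝ} (hS : 0 ≤ S) {x : EuclideanSpace ℝ (Fin m)}
    (hx : x ∈ cube S []) : ‖x‖ ≤ Real.sqrt m * S := by
  rw [EuclideanSpace.norm_eq]
  have hb : ∀ i : Fin m, ‖x i‖ ^ 2 ≤ S ^ 2 := by
    intro i
    obtain ⟨h1, h2⟩ := hx i
    simp only [corner, List.length_nil] at h1 h2 ⊢
    have hsd : sd S 0 = 2 * S := by unfold sd; norm_num
    rw [hsd] at h2
    have : |x i| ≤ S := abs_le.mpr ⟨by linarith, by linarith⟩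
    rw [Real.norm_eq_abs]
    exact pow_le_pow_left₀ (abs_nonneg _) this 2
  calc Real.sqrt (∑ i, ‖x i‖ ^ 2) ≤ Real.sqrt (∑ _i : Fin m, S ^ 2) :=
        Real.sqrt_le_sqrt (Finset.sum_le_sum fun i _ => hb i)
    _ = Real.sqrt (m * S ^ 2) := by
        rw [Finset.sum_const, Finset.card_univ, Fintype.card_fin, nsmul_eq_mul]
    _ = Real.sqrt m * S := by rw [Real.sqrt_mul (Nat.cast_nonneg m), Real.sqrt_sq hS]

lemma glim_norm_le {S : ℝ} (hS : 0 < S) {a : List (Fin m → Bool) → ℝ} (t : ℝ) :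
    ‖glim S a t‖ ≤ Real.sqrt m * S := by
  have h1 : Tendsto (fun j => ‖gj S a j t‖) atTop (nhds ‖glim S a t‖) :=
    (glim_tendsto hS a t).norm
  refine le_of_tendsto h1 (Eventually.of_forall fun j => ?_)
  exact norm_le_of_mem_root hS.le (level_subset _ (fun d w => cube_cons_subset hS.le d w) _ (gj_mem hS a j t))

lemma gj_const_on_ivl {S : ℝ} {a : List (Fin m → Bool) → ℝ} (ha0 : ∀ w, 0 ≤ a w)
    (hacons : ∀ w, a w = ∑ d, a (d :: w)) {t : ℝ} {w : List (Fin m → Bool)}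
    (ht : t ∈ ivl a w) :
    gj S a w.length t = (WithLp.equiv 2 (Fin m → ℝ)).symm (corner S w) := by
  rw [gj, branch_eq_of_mem ha0 hacons ht]

end glimsec

section keysec
open Filter
variable {m : ℕ}

lemma ivl_root {D : Type*} [Fintype D] [Nonempty D] [DecidableEq D] (a : List D → ℝ) :
    ivl a ([] : List D) = Set.Ico 0 (a []) := by
  simp [ivl, lep]

lemma cube_level_union {S : ℝ} (hS : 0 ≤ S) (j : ℕ) :
    ⋃ v : Fin j → (Fin m → Bool), cube S (List.ofFn v) = cube S [] :=
  level_union _ (fun d w => cube_cons_subset hS d w) (fun w => cube_cons_cover w) j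

lemma cube_level_pairwise (S : ℝ) (hS : 0 ≤ S) (j : ℕ) :
    Pairwise (Function.onFun Disjoint fun v : Fin j → (Fin m → Bool) => cube S (List.ofFn v)) := by
  intro v v' hvv'
  refine level_disjoint _ (fun d w => cube_cons_subset hS d w)
    (fun w d d' hd => cube_cons_disjoint w hd) j _ _
    (List.length_ofFn (f := v)) (List.length_ofFn (f := v')) ?_
  intro h
  exact hvv' (List.ofFn_injective h)

lemma ivl_level_union {D : Type*} [Fintype D] [Nonempty D] [DecidableEq D]
    {a : List D → ℝ} (ha0 : ∀ w, 0 ≤ a w) (hacons : ∀ w, a w = ∑ d, a (d :: w)) (j : ℕ) :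
    ⋃ v : Fin j → D, ivl a (List.ofFn v) = ivl a [] :=
  level_union _ (fun d w => ivl_cons_subset ha0 hacons d w)
    (fun w => ivl_cons_cover ha0 hacons w) j

lemma ivl_level_pairwise {D : Type*} [Fintype D] [Nonempty D] [DecidableEq D]
    {a : List D → ℝ} (ha0 : ∀ w, 0 ≤ a w) (hacons : ∀ w, a w = ∑ d, a (d :: w)) (j : ℕ) :
    Pairwise (Function.onFun Disjoint fun v : Fin j → D => ivl a (List.ofFn v)) := by
  intro v v' hvv'
  refine level_disjoint _ (fun d w => ivl_cons_subset ha0 hacons d w)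
    (fun w d d' hd => ivl_cons_disjoint ha0 w hd) j _ _
    (List.length_ofFn (f := v)) (List.length_ofFn (f := v')) ?_
  intro h
  exact hvv' (List.ofFn_injective h)

lemma mass_level_sum {S : ℝ} (hS : 0 ≤ S) (σ : Measure (EuclideanSpace ℝ (Fin m)))
    [IsFiniteMeasure σ] (hroot : σ (cube S ([] : List (Fin m → Bool)))ᶜ = 0) (j : ℕ) :
    ∑ v : Fin j → (Fin m → Bool), (σ (cube S (List.ofFn v))).toReal = (σ Set.univ).toReal := by
  have h1 : σ (cube S ([] : List (Fin m → Bool))) = σ Set.univ := by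
    have := measure_add_measure_compl (μ := σ) (measurableSet_cube S ([] : List (Fin m → Bool)))
    rw [hroot, add_zero] at this
    exact this
  have h2 : σ (cube S ([] : List (Fin m → Bool))) = ∑ v : Fin j → (Fin m → Bool), σ (cube S (List.ofFn v)) := by
    rw [← cube_level_union hS j, measure_iUnion (cube_level_pairwise S hS j)
      (fun v => measurableSet_cube S _), tsum_fintype]
  rw [← h1, h2, ENNReal.toReal_sum]
  intro v _
  exact (measure_mono (Set.subset_univ _)).trans_lt (measure_lt_top σ _) |>.ne

/-- The key weak-convergence statement: if the dyadic cube masses of a sequence of finite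
measures supported in the root cube converge to a consistent family `a`, then integrals of
continuous functions converge to the integral against the quantile-map image measure. -/
lemma key_tendsto {S : ℝ} (hS : 0 < S) (σs : ℕ → Measure (EuclideanSpace ℝ (Fin m)))
    (hfin : ∀ n, IsFiniteMeasure (σs n)) (Cr : ℝ)
    (hσle : ∀ n, (σs n Set.univ).toReal ≤ Cr)
    (hσroot : ∀ n, σs n (cube S ([] : List (Fin m → Bool)))ᶜ = 0)
    (a : List (Fin m → Bool) → ℝ) (ha0 : ∀ w, 0 ≤ a w)
    (hacons : ∀ w, a w = ∑ d, a (d :: w))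
    (hconv : ∀ w, Tendsto (fun n => (σs n (cube S w)).toReal) atTop (nhds (a w)))
    (ψ : EuclideanSpace ℝ (Fin m) → ℝ) (hψ : Continuous ψ) :
    Tendsto (fun n => ∫ z, ψ z ∂(σs n)) atTop
      (nhds (∫ t in Set.Ico (0:ℝ) (a []), ψ (glim S a t))) := by
  classical
  have hCr0 : 0 ≤ Cr := le_trans ENNReal.toReal_nonneg (hσle 0)
  have hM0 : 0 ≤ a [] := ha0 []
  set B : Set (EuclideanSpace ℝ (Fin m)) := Metric.closedBall 0 (Real.sqrt m * S) with hB
  have hrootB : cube S ([] : List (Fin m → Bool)) ⊆ B := fun x hx =>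
    mem_closedBall_zero_iff.mpr (norm_le_of_mem_root hS.le hx)
  have hcubeB : ∀ w, cube S w ⊆ B := fun w =>
    (level_subset _ (fun d w => cube_cons_subset hS.le d w) w).trans hrootB
  have hBcompact : IsCompact B := isCompact_closedBall _ _
  have hglimB : ∀ t, glim S a t ∈ B := fun t => mem_closedBall_zero_iff.mpr (glim_norm_le hS t)
  obtain ⟨Kψ, hKψ⟩ := hBcompact.exists_bound_of_continuousOn hψ.continuousOn
  have huc : UniformContinuousOn ψ B := hBcompact.uniformContinuousOn_of_continuous hψ.continuousOn
  rw [Metric.uniformContinuousOn_iff] at huc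
  have hglimmeas : Measurable (glim S a) := glim_measurable hS ha0
  have hψint : ∀ n, Integrable ψ (σs n) := by
    intro n
    haveI := hfin n
    refine Integrable.mono' (integrable_const Kψ) hψ.aestronglyMeasurable ?_
    have hae : ∀ᵐ z ∂(σs n), z ∈ cube S ([] : List (Fin m → Bool)) :=
      mem_ae_iff.mpr (hσroot n)
    filter_upwards [hae] with z hz
    exact hKψ z (hrootB hz)
  have hIcovol : volume (Set.Ico (0:ℝ) (a [])) < ⊤ := by
    rw [Real.volume_Ico]; exact ENNReal.ofReal_lt_top
  haveI hIcofin : IsFiniteMeasure (volume.restrict (Set.Ico (0:ℝ) (a []))) :=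
    ⟨by rwa [Measure.restrict_apply_univ]⟩
  have hψglim_int : Integrable (fun t => ψ (glim S a t))
      (volume.restrict (Set.Ico (0:ℝ) (a []))) := by
    refine Integrable.mono' (integrable_const Kψ)
      (hψ.measurable.comp hglimmeas).aestronglyMeasurable ?_
    exact Filter.Eventually.of_forall fun t => hKψ _ (hglimB t)
  rw [Metric.tendsto_atTop]
  intro ε hε
  set ε' : ℝ := ε / (2 * (Cr + a [] + 1)) with hε'def
  have hε'pos : 0 < ε' := by
    apply div_pos hε; positivity
  obtain ⟨δ, hδpos, hδ⟩ := huc ε' hε'pos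
  have hsdtend : Tendsto (fun j : ℕ => Real.sqrt m * sd S j) atTop (nhds 0) := by
    have h2 : Tendsto (fun j : ℕ => ((1:ℝ)/2)^j) atTop (nhds 0) :=
      tendsto_pow_atTop_nhds_zero_of_lt_one (by norm_num) (by norm_num)
    have h3 := h2.const_mul (Real.sqrt m * (2 * S))
    rw [mul_zero] at h3
    refine h3.congr fun j => ?_
    rw [sd_eq]; ring
  obtain ⟨j, hj⟩ := (hsdtend.eventually (gt_mem_nhds hδpos)).exists
  set cE := fun w : List (Fin m → Bool) => (WithLp.equiv 2 (Fin m → ℝ)).symm (corner S w)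
    with hcE
  set Tj : ℕ → ℝ := fun n => ∑ v : Fin j → (Fin m → Bool),
    ψ (cE (List.ofFn v)) * (σs n (cube S (List.ofFn v))).toReal with hTj
  set Tinf : ℝ := ∑ v : Fin j → (Fin m → Bool), ψ (cE (List.ofFn v)) * a (List.ofFn v)
    with hTinf
  -- est1
  have hsplit : ∀ n, ∫ z, ψ z ∂(σs n) =
      ∑ v : Fin j → (Fin m → Bool), ∫ z in cube S (List.ofFn v), ψ z ∂(σs n) := by
    intro n
    haveI := hfin n
    have h1 : (σs n).restrict (cube S ([] : List (Fin m → Bool))) = σs n :=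
      Measure.restrict_eq_self_of_ae_mem (mem_ae_iff.mpr (hσroot n))
    calc ∫ z, ψ z ∂(σs n) = ∫ z in cube S ([] : List (Fin m → Bool)), ψ z ∂(σs n) := by
          rw [h1]
      _ = ∫ z in ⋃ v : Fin j → (Fin m → Bool), cube S (List.ofFn v), ψ z ∂(σs n) := by
          rw [cube_level_union hS.le j]
      _ = ∑ v : Fin j → (Fin m → Bool), ∫ z in cube S (List.ofFn v), ψ z ∂(σs n) := by
          rw [integral_iUnion (fun v => measurableSet_cube S _)
            (cube_level_pairwise S hS.le j) (hψint n).integrableOn, tsum_fintype]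
  have hcorner_mem : ∀ w : List (Fin m → Bool), cE w ∈ cube S w := fun w => corner_mem_cube hS w
  have est1 : ∀ n, |(∫ z, ψ z ∂(σs n)) - Tj n| ≤ ε' * Cr := by
    intro n
    haveI := hfin n
    rw [hsplit n, hTj, ← Finset.sum_sub_distrib]
    refine (Finset.abs_sum_le_sum_abs _ _).trans ?_
    have hterm : ∀ v : Fin j → (Fin m → Bool),
        |(∫ z in cube S (List.ofFn v), ψ z ∂(σs n)) -
          ψ (cE (List.ofFn v)) * (σs n (cube S (List.ofFn v))).toReal| ≤
          ε' * (σs n (cube S (List.ofFn v))).toReal := by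
      intro v
      have hconst : ∫ _z in cube S (List.ofFn v), ψ (cE (List.ofFn v)) ∂(σs n) =
          ψ (cE (List.ofFn v)) * (σs n (cube S (List.ofFn v))).toReal := by
        rw [setIntegral_const, smul_eq_mul, mul_comm, measureReal_def]
      rw [← hconst, ← integral_sub (hψint n).integrableOn (integrableOn_const
        (measure_lt_top _ _).ne)]
      have hb : ∀ z ∈ cube S (List.ofFn v), ‖ψ z - ψ (cE (List.ofFn v))‖ ≤ ε' := by
        intro z hz
        have hd : dist z (cE (List.ofFn v)) ≤ Real.sqrt m * sd S j := by
          have h := dist_le_of_mem_cube hS.le hz (hcorner_mem (List.ofFn v))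
          rwa [List.length_ofFn] at h
        have h2 := hδ z (hcubeB _ hz) (cE (List.ofFn v))
          (hcubeB _ (hcorner_mem (List.ofFn v))) (lt_of_le_of_lt hd hj)
        rw [Real.norm_eq_abs, ← Real.dist_eq]
        exact h2.le
      have := norm_setIntegral_le_of_norm_le_const (measure_lt_top (σs n) _)
        hb
      rwa [Real.norm_eq_abs, measureReal_def] at this
    refine (Finset.sum_le_sum fun v _ => hterm v).trans ?_
    rw [← Finset.mul_sum, mass_level_sum hS.le (σs n) (hσroot n) j]
    exact mul_le_mul_of_nonneg_left (hσle n) hε'pos.le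
  -- est2
  have est2 : Tendsto Tj atTop (nhds Tinf) := by
    rw [hTj, hTinf]
    exact tendsto_finset_sum _ fun v _ => ((hconv (List.ofFn v)).const_mul _)
  -- est3
  have hgjB : ∀ t, gj S a j t ∈ B := fun t => hcubeB _ (gj_mem hS a j t)
  have hgj_int : Integrable (fun t => ψ (gj S a j t))
      (volume.restrict (Set.Ico (0:ℝ) (a []))) := by
    refine Integrable.mono' (integrable_const Kψ)
      (hψ.measurable.comp (gj_measurable ha0 j)).aestronglyMeasurable ?_
    exact Filter.Eventually.of_forall fun t => hKψ _ (hgjB t)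
  have hIstep : ∫ t in Set.Ico (0:ℝ) (a []), ψ (gj S a j t) = Tinf := by
    rw [← ivl_root a, ← ivl_level_union ha0 hacons j]
    have hint : IntegrableOn (fun t => ψ (gj S a j t))
        (⋃ v : Fin j → (Fin m → Bool), ivl a (List.ofFn v)) volume := by
      rw [ivl_level_union ha0 hacons j, ivl_root a]
      exact hgj_int
    rw [integral_iUnion (fun v => measurableSet_ivl a _)
      (ivl_level_pairwise ha0 hacons j) hint, tsum_fintype, hTinf]
    refine Finset.sum_congr rfl fun v _ => ?_
    have h1 : Set.EqOn (fun t => ψ (gj S a j t)) (fun _ => ψ (cE (List.ofFn v)))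
        (ivl a (List.ofFn v)) := by
      intro t ht
      have h2 := gj_const_on_ivl (S := S) ha0 hacons ht
      rw [List.length_ofFn] at h2
      simp only [h2, hcE]
    rw [setIntegral_congr_fun (measurableSet_ivl a _) h1, setIntegral_const,
      measureReal_def, volume_ivl ha0, ENNReal.toReal_ofReal (ha0 _), smul_eq_mul, mul_comm]
  have est3 : |Tinf - ∫ t in Set.Ico (0:ℝ) (a []), ψ (glim S a t)| ≤ ε' * a [] := by
    rw [← hIstep, ← integral_sub hgj_int hψglim_int]
    have hb : ∀ᵐ t ∂(volume.restrict (Set.Ico (0:ℝ) (a []))),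
        ‖ψ (gj S a j t) - ψ (glim S a t)‖ ≤ ε' := by
      refine Filter.Eventually.of_forall fun t => ?_
      have hd : dist (gj S a j t) (glim S a t) ≤ Real.sqrt m * sd S j := glim_dist hS a t j
      have h2 := hδ (gj S a j t) (hgjB t) (glim S a t) (hglimB t) (lt_of_le_of_lt hd hj)
      rw [Real.norm_eq_abs, ← Real.dist_eq]
      exact h2.le
    have h3 := norm_integral_le_of_norm_le_const hb
    rw [Real.norm_eq_abs] at h3
    refine h3.trans ?_
    rw [measureReal_def, Measure.restrict_apply_univ, Real.volume_Ico, sub_zero,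
      ENNReal.toReal_ofReal hM0]
  -- assemble
  have hhalf : ε' * Cr + ε' * a [] < ε / 2 := by
    have h1 : ε' * (Cr + a [] + 1) = ε / 2 := by
      rw [hε'def]; field_simp
    nlinarith [hε'pos]
  rw [Metric.tendsto_atTop] at est2
  obtain ⟨N, hN⟩ := est2 (ε / 2) (by positivity)
  refine ⟨N, fun n hn => ?_⟩
  have h2 := hN n hn
  rw [Real.dist_eq] at h2 ⊢
  have htri : |(∫ z, ψ z ∂(σs n)) - ∫ t in Set.Ico (0:ℝ) (a []), ψ (glim S a t)| ≤
      |(∫ z, ψ z ∂(σs n)) - Tj n| + |Tj n - Tinf| +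
      |Tinf - ∫ t in Set.Ico (0:ℝ) (a []), ψ (glim S a t)| := by
    calc |(∫ z, ψ z ∂(σs n)) - ∫ t in Set.Ico (0:ℝ) (a []), ψ (glim S a t)|
        ≤ |(∫ z, ψ z ∂(σs n)) - Tinf| +
          |Tinf - ∫ t in Set.Ico (0:ℝ) (a []), ψ (glim S a t)| := abs_sub_le _ _ _
      _ ≤ |(∫ z, ψ z ∂(σs n)) - Tj n| + |Tj n - Tinf| +
          |Tinf - ∫ t in Set.Ico (0:ℝ) (a []), ψ (glim S a t)| := by
          have := abs_sub_le (∫ z, ψ z ∂(σs n)) (Tj n) Tinf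
          linarith
  have h1 := est1 n
  linarith

end keysec

end YMRaux

/-- Representation of weak limits of nonnegative Carathéodory integrands of uniformly
`L¹`-bounded compositions: the weak-* limit in measures of `φ(·,Fⁿ(·))` along a
subsequence equals the Young-measure average `z ↦ ∫ φ(z,λ) dν_z(λ)` (defined as the
monotone limit of the truncated integrals, and belonging to `L¹(Q)`) plus a nonnegative
finite concentration measure `μ` supported in the closure of `Q`. -/
theorem young_measure_representation_with_concentration
    {m : ℕ} {E : Type*} [NormedAddCommGroup E] [NormedSpace ℝ E]
    [FiniteDimensional ℝ E] [MeasurableSpace E] [BorelSpace E]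
    (Q : Set (EuclideanSpace ℝ (Fin m))) (hQb : Bornology.IsBounded Q)
    (hQm : MeasurableSet Q) (hQfin : volume Q < ⊤)
    (φ : EuclideanSpace ℝ (Fin m) → E → ℝ)
    (hφm : ∀ lam : E, Measurable (fun z => φ z lam))
    (hφc : ∀ z, Continuous (fun lam => φ z lam))
    (hφpos : ∀ z lam, 0 ≤ φ z lam)
    (F : ℕ → EuclideanSpace ℝ (Fin m) → E)
    (hFm : ∀ n, Measurable (F n))
    (hbound : ∃ C : ℝ≥0∞, C < ⊤ ∧ ∀ n,
      (∫⁻ z in Q, ENNReal.ofReal (φ z (F n z))) ≤ C)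
    (ν : EuclideanSpace ℝ (Fin m) → Measure E)
    (hνm : Measurable ν)
    (hνp : ∀ z, IsProbabilityMeasure (ν z))
    (hYoung : ∀ h : EuclideanSpace ℝ (Fin m) → E → ℝ,
      (∀ lam, Measurable fun z => h z lam) → (∀ z, Continuous fun lam => h z lam) →
      (∃ C : ℝ, ∀ z lam, |h z lam| ≤ C) →
      ∀ ψ : EuclideanSpace ℝ (Fin m) → ℝ, Integrable ψ (volume.restrict Q) →
        Filter.Tendsto (fun n => ∫ z in Q, h z (F n z) * ψ z) Filter.atTop
          (nhds (∫ z in Q, (∫ lam, h z lam ∂(ν z)) * ψ z)))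
    (φbar : EuclideanSpace ℝ (Fin m) → ℝ≥0∞)
    (hφbar : ∀ z, φbar z = ⨆ R : ℕ, ENNReal.ofReal (∫ lam, min (φ z lam) (R : ℝ) ∂(ν z))) :
    (∀ᵐ z ∂(volume.restrict Q), φbar z < ⊤) ∧
    Integrable (fun z => (φbar z).toReal) (volume.restrict Q) ∧
    ∃ nk : ℕ → ℕ, StrictMono nk ∧
      ∃ μ : Measure (EuclideanSpace ℝ (Fin m)), IsFiniteMeasure μ ∧
        μ (closure Q)ᶜ = 0 ∧
        ∀ ψ : EuclideanSpace ℝ (Fin m) → ℝ, Continuous ψ →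
          Filter.Tendsto (fun k => ∫ z in Q, φ z (F (nk k) z) * ψ z) Filter.atTop
            (nhds ((∫ z in Q, (φbar z).toReal * ψ z) + ∫ x, ψ x ∂μ)) := by
  classical
  obtain ⟨C, hCfin, hCb⟩ := hbound
  set Cr : ℝ := C.toReal with hCrdef
  have hCr0 : 0 ≤ Cr := ENNReal.toReal_nonneg
  haveI hQfinm : IsFiniteMeasure (volume.restrict Q) :=
    ⟨by rwa [Measure.restrict_apply_univ]⟩
  -- joint measurability of φ
  have hφu : Measurable (Function.uncurry φ) := by
    have h1 : Measurable (Function.uncurry (fun lam (z : EuclideanSpace ℝ (Fin m)) => φ z lam)) :=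
      measurable_uncurry_of_continuous_of_measurable hφc hφm
    exact h1.comp measurable_swap
  have hφF : ∀ n, Measurable fun z => φ z (F n z) := fun n =>
    hφu.comp (measurable_id.prodMk (hFm n))
  -- Part A : the Young measure average φbar
  let κ : ProbabilityTheory.Kernel (EuclideanSpace ℝ (Fin m)) E := ⟨ν, hνm⟩
  haveI : ProbabilityTheory.IsMarkovKernel κ := ⟨hνp⟩
  have hgRmeas : ∀ R : ℕ, Measurable fun z => ∫ lam, min (φ z lam) (R:ℝ) ∂(ν z) := by
    intro R
    have hsm : StronglyMeasurable
        (Function.uncurry fun (z : EuclideanSpace ℝ (Fin m)) lam => min (φ z lam) (R:ℝ)) :=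
      (hφu.min measurable_const).stronglyMeasurable
    exact (hsm.integral_kernel_prod_right (κ := κ)).measurable
  have hmin_int : ∀ (z) (R : ℕ), Integrable (fun lam => min (φ z lam) (R:ℝ)) (ν z) := by
    intro z R
    haveI := hνp z
    refine Integrable.mono' (integrable_const (R:ℝ))
      ((hφc z).min continuous_const).aestronglyMeasurable ?_
    refine Filter.Eventually.of_forall fun lam => ?_
    rw [Real.norm_eq_abs, abs_of_nonneg (le_min (hφpos z lam) (Nat.cast_nonneg R))]
    exact min_le_right _ _
  have hgR_nonneg : ∀ (R : ℕ) z, 0 ≤ ∫ lam, min (φ z lam) (R:ℝ) ∂(ν z) := fun R z =>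
    integral_nonneg fun lam => le_min (hφpos z lam) (Nat.cast_nonneg R)
  have hgR_le : ∀ (R : ℕ) z, (∫ lam, min (φ z lam) (R:ℝ) ∂(ν z)) ≤ (R:ℝ) := by
    intro R z
    haveI := hνp z
    calc ∫ lam, min (φ z lam) (R:ℝ) ∂(ν z) ≤ ∫ _lam, (R:ℝ) ∂(ν z) :=
          integral_mono (hmin_int z R) (integrable_const _) fun lam => min_le_right _ _
      _ = (R:ℝ) := by simp
  have hgR_mono : ∀ z, Monotone fun R : ℕ => ∫ lam, min (φ z lam) (R:ℝ) ∂(ν z) := by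
    intro z R R' h
    exact integral_mono (hmin_int z R) (hmin_int z R') fun lam =>
      min_le_min le_rfl (Nat.cast_le.mpr h)
  have hY : ∀ (R : ℕ) (ψ : EuclideanSpace ℝ (Fin m) → ℝ), Integrable ψ (volume.restrict Q) →
      Filter.Tendsto (fun n => ∫ z in Q, min (φ z (F n z)) (R:ℝ) * ψ z) Filter.atTop
        (nhds (∫ z in Q, (∫ lam, min (φ z lam) (R:ℝ) ∂(ν z)) * ψ z)) := by
    intro R ψ hψ
    refine hYoung (fun z lam => min (φ z lam) (R:ℝ)) (fun lam => (hφm lam).min measurable_const)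
      (fun z => (hφc z).min continuous_const) ⟨(R:ℝ), fun z lam => ?_⟩ ψ hψ
    rw [abs_of_nonneg (le_min (hφpos z lam) (Nat.cast_nonneg R))]
    exact min_le_right _ _
  have htrunc_le : ∀ (R : ℕ) n, (∫ z in Q, min (φ z (F n z)) (R:ℝ)) ≤ Cr := by
    intro R n
    have h0 : 0 ≤ᵐ[volume.restrict Q] fun z => min (φ z (F n z)) (R:ℝ) :=
      Filter.Eventually.of_forall fun z => le_min (hφpos _ _) (Nat.cast_nonneg R)
    rw [integral_eq_lintegral_of_nonneg_ae h0 ((hφF n).min measurable_const).aestronglyMeasurable]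
    refine ENNReal.toReal_mono hCfin.ne ?_
    exact le_trans (lintegral_mono fun z => ENNReal.ofReal_le_ofReal (min_le_left _ _)) (hCb n)
  have hgRQ_le : ∀ R : ℕ, (∫ z in Q, (∫ lam, min (φ z lam) (R:ℝ) ∂(ν z))) ≤ Cr := by
    intro R
    have h := hY R (fun _ => 1) (integrable_const 1)
    simp only [mul_one] at h
    exact le_of_tendsto h (Filter.Eventually.of_forall fun n => htrunc_le R n)
  have hgRQ_int : ∀ R : ℕ, Integrable (fun z => ∫ lam, min (φ z lam) (R:ℝ) ∂(ν z))
      (volume.restrict Q) := by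
    intro R
    refine Integrable.mono' (integrable_const (R:ℝ)) (hgRmeas R).aestronglyMeasurable ?_
    refine Filter.Eventually.of_forall fun z => ?_
    rw [Real.norm_eq_abs, abs_of_nonneg (hgR_nonneg R z)]
    exact hgR_le R z
  have hφbar_meas : Measurable φbar := by
    have h : φbar = fun z => ⨆ R : ℕ, ENNReal.ofReal (∫ lam, min (φ z lam) (R:ℝ) ∂(ν z)) :=
      funext hφbar
    rw [h]
    exact Measurable.iSup fun R => (hgRmeas R).ennreal_ofReal
  have hφbar_lint : (∫⁻ z in Q, φbar z) ≤ C := by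
    have h1 : (∫⁻ z in Q, φbar z) =
        ⨆ R : ℕ, ∫⁻ z in Q, ENNReal.ofReal (∫ lam, min (φ z lam) (R:ℝ) ∂(ν z)) := by
      rw [← lintegral_iSup (fun R => (hgRmeas R).ennreal_ofReal)
        (fun R R' h z => ENNReal.ofReal_le_ofReal (hgR_mono z h))]
      exact lintegral_congr fun z => hφbar z
    rw [h1]
    refine iSup_le fun R => ?_
    rw [← ofReal_integral_eq_lintegral_ofReal (hgRQ_int R)
      (Filter.Eventually.of_forall fun z => hgR_nonneg R z)]
    calc ENNReal.ofReal (∫ z in Q, (∫ lam, min (φ z lam) (R:ℝ) ∂(ν z)))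
        ≤ ENNReal.ofReal Cr := ENNReal.ofReal_le_ofReal (hgRQ_le R)
      _ ≤ C := by rw [hCrdef]; exact ENNReal.ofReal_toReal_le
  have hφbar_ne : (∫⁻ z in Q, φbar z) ≠ ⊤ := (lt_of_le_of_lt hφbar_lint hCfin).ne
  have conc1 : ∀ᵐ z ∂(volume.restrict Q), φbar z < ⊤ := ae_lt_top hφbar_meas hφbar_ne
  have conc2 : Integrable (fun z => (φbar z).toReal) (volume.restrict Q) :=
    integrable_toReal_of_lintegral_ne_top hφbar_meas.aemeasurable hφbar_ne
  -- Geometry : the root cube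
  obtain ⟨r, hr⟩ := hQb.subset_closedBall 0
  set S : ℝ := |r| + 1 with hSdef
  have hS : 0 < S := by positivity
  have hQsub : Q ⊆ YMRaux.cube S ([] : List (Fin m → Bool)) := by
    intro z hz i
    have h1 : ‖z‖ ≤ r := by simpa [Metric.mem_closedBall, dist_zero_right] using hr hz
    have h2 : |z i| ≤ ‖z‖ := by
      rw [EuclideanSpace.norm_eq]
      have h3 : |z i| = Real.sqrt (‖z i‖ ^ 2) := by
        rw [Real.sqrt_sq_eq_abs, Real.norm_eq_abs, abs_abs]
      rw [h3]
      exact Real.sqrt_le_sqrt (Finset.single_le_sum (f := fun i => ‖z i‖ ^ 2)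
        (fun i _ => sq_nonneg _) (Finset.mem_univ i))
    have h4 : |z i| < S := by
      rw [hSdef]
      calc |z i| ≤ r := h2.trans h1
        _ ≤ |r| := le_abs_self r
        _ < |r| + 1 := by linarith
    have h5 := abs_lt.mp h4
    have hsd0 : YMRaux.sd S 0 = 2 * S := by unfold YMRaux.sd; norm_num
    simp only [YMRaux.corner, List.length_nil, hsd0]
    exact ⟨by linarith [h5.1], by linarith [h5.2]⟩
  set B : Set (EuclideanSpace ℝ (Fin m)) := Metric.closedBall 0 (Real.sqrt m * S) with hBdef
  have hrootB : YMRaux.cube S ([] : List (Fin m → Bool)) ⊆ B := fun x hx =>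
    mem_closedBall_zero_iff.mpr (YMRaux.norm_le_of_mem_root hS.le hx)
  have hQB : Q ⊆ B := hQsub.trans hrootB
  have hclQB : closure Q ⊆ B := closure_minimal hQB Metric.isClosed_closedBall
  have hBcompact : IsCompact B := isCompact_closedBall _ _
  -- the measures σm n
  set σm : ℕ → Measure (EuclideanSpace ℝ (Fin m)) := fun n =>
    (volume.restrict Q).withDensity (fun z => ENNReal.ofReal (φ z (F n z))) with hσmdef
  have hσap : ∀ n (A : Set (EuclideanSpace ℝ (Fin m))), MeasurableSet A →
      σm n A = ∫⁻ z in A ∩ Q, ENNReal.ofReal (φ z (F n z)) := by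
    intro n A hA
    rw [hσmdef]
    rw [withDensity_apply _ hA, Measure.restrict_restrict hA]
  have hσuniv : ∀ n, σm n Set.univ ≤ C := by
    intro n
    rw [hσap n Set.univ MeasurableSet.univ, Set.univ_inter]
    exact hCb n
  have hσfin : ∀ n, IsFiniteMeasure (σm n) := fun n => ⟨lt_of_le_of_lt (hσuniv n) hCfin⟩
  have hσroot : ∀ n, σm n (YMRaux.cube S ([] : List (Fin m → Bool)))ᶜ = 0 := by
    intro n
    rw [hσap n _ (YMRaux.measurableSet_cube S _).compl]
    have h1 : (YMRaux.cube S ([] : List (Fin m → Bool)))ᶜ ∩ Q = ∅ := by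
      rw [Set.eq_empty_iff_forall_notMem]
      rintro z ⟨hz1, hz2⟩
      exact hz1 (hQsub hz2)
    rw [h1]
    exact setLIntegral_empty _
  -- subsequence extraction
  have hxmem : ∀ n, (fun w => (σm n (YMRaux.cube S w)).toReal) ∈
      Set.pi Set.univ (fun _ : List (Fin m → Bool) => Set.Icc 0 Cr) := by
    intro n w _
    refine ⟨ENNReal.toReal_nonneg, ENNReal.toReal_mono hCfin.ne ?_⟩
    exact (measure_mono (Set.subset_univ _)).trans (hσuniv n)
  obtain ⟨a, hamem, nk, hnkmono, hconv⟩ :=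
    (isCompact_univ_pi fun _ : List (Fin m → Bool) => isCompact_Icc).tendsto_subseq hxmem
  have hconvw : ∀ w, Filter.Tendsto (fun k => (σm (nk k) (YMRaux.cube S w)).toReal)
      Filter.atTop (nhds (a w)) := fun w => (tendsto_pi_nhds.mp hconv) w
  have ha0 : ∀ w, 0 ≤ a w := fun w => (hamem w (Set.mem_univ w)).1
  have hσadd : ∀ n w, (σm n (YMRaux.cube S w)).toReal =
      ∑ d, (σm n (YMRaux.cube S (d :: w))).toReal := by
    intro n w
    haveI := hσfin n
    have h1 : YMRaux.cube S w = ⋃ d, YMRaux.cube S (d :: w) :=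
      Set.Subset.antisymm (YMRaux.cube_cons_cover w)
        (Set.iUnion_subset fun d => YMRaux.cube_cons_subset hS.le d w)
    rw [h1, measure_iUnion (fun d d' hdd' => YMRaux.cube_cons_disjoint w hdd')
      (fun d => YMRaux.measurableSet_cube S _), tsum_fintype,
      ENNReal.toReal_sum (fun d _ => (measure_lt_top _ _).ne)]
  have hacons : ∀ w, a w = ∑ d, a (d :: w) := by
    intro w
    refine tendsto_nhds_unique (hconvw w) ?_
    have h2 : Filter.Tendsto (fun k => ∑ d, (σm (nk k) (YMRaux.cube S (d :: w))).toReal)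
        Filter.atTop (nhds (∑ d, a (d :: w))) := tendsto_finset_sum _ fun d _ => hconvw _
    exact h2.congr fun k => (hσadd (nk k) w).symm
  set M : ℝ := a [] with hMdef
  have hM0 : 0 ≤ M := ha0 []
  -- key convergence
  have key : ∀ ψ : EuclideanSpace ℝ (Fin m) → ℝ, Continuous ψ →
      Filter.Tendsto (fun k => ∫ z, ψ z ∂(σm (nk k))) Filter.atTop
        (nhds (∫ t in Set.Ico (0:ℝ) M, ψ (YMRaux.glim S a t))) := by
    intro ψ hψ
    exact YMRaux.key_tendsto hS (fun k => σm (nk k)) (fun k => hσfin (nk k)) Cr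
      (fun k => ENNReal.toReal_mono hCfin.ne (hσuniv (nk k)))
      (fun k => hσroot (nk k)) a ha0 hacons (fun w => hconvw w) ψ hψ
  -- integrals against σm
  have hwd : ∀ n (ψ : EuclideanSpace ℝ (Fin m) → ℝ),
      (∫ z, ψ z ∂(σm n)) = ∫ z in Q, φ z (F n z) * ψ z := by
    intro n ψ
    have h1 : σm n = (volume.restrict Q).withDensity
        (fun z => ((φ z (F n z)).toNNReal : ℝ≥0∞)) := rfl
    rw [h1, integral_withDensity_eq_integral_smul ((hφF n).real_toNNReal) ψ]
    refine integral_congr_ae (Filter.Eventually.of_forall fun z => ?_)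
    simp only [NNReal.smul_def]
    rw [Real.coe_toNNReal _ (hφpos _ _), smul_eq_mul]
  -- the limit measure
  set σlim : Measure (EuclideanSpace ℝ (Fin m)) :=
    Measure.map (YMRaux.glim S a) (volume.restrict (Set.Ico (0:ℝ) M)) with hσlimdef
  have hglimmeas : Measurable (YMRaux.glim S a) := YMRaux.glim_measurable hS ha0
  have hσlim_ap : ∀ A : Set (EuclideanSpace ℝ (Fin m)), MeasurableSet A →
      σlim A = volume ((YMRaux.glim S a ⁻¹' A) ∩ Set.Ico (0:ℝ) M) := by
    intro A hA
    rw [hσlimdef, Measure.map_apply hglimmeas hA, Measure.restrict_apply (hglimmeas hA)]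
  haveI hσlimfin : IsFiniteMeasure σlim := by
    refine ⟨?_⟩
    rw [hσlim_ap _ MeasurableSet.univ]
    refine lt_of_le_of_lt (measure_mono Set.inter_subset_right) ?_
    rw [Real.volume_Ico]
    exact ENNReal.ofReal_lt_top
  have hIglim_eq : ∀ ψ : EuclideanSpace ℝ (Fin m) → ℝ, Continuous ψ →
      (∫ z, ψ z ∂σlim) = ∫ t in Set.Ico (0:ℝ) M, ψ (YMRaux.glim S a t) := by
    intro ψ hψ
    rw [hσlimdef]
    exact integral_map hglimmeas.aemeasurable hψ.aestronglyMeasurable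
  -- support of σlim
  have hsdtend : Filter.Tendsto (fun j : ℕ => Real.sqrt m * YMRaux.sd S j)
      Filter.atTop (nhds 0) := by
    have h2 : Filter.Tendsto (fun j : ℕ => ((1:ℝ)/2)^j) Filter.atTop (nhds 0) :=
      tendsto_pow_atTop_nhds_zero_of_lt_one (by norm_num) (by norm_num)
    have h3 := h2.const_mul (Real.sqrt m * (2 * S))
    rw [mul_zero] at h3
    refine h3.congr fun j => ?_
    rw [YMRaux.sd_eq]; ring
  have hglim_mem : ∀ t ∈ Set.Ico (0:ℝ) M, YMRaux.glim S a t ∈ closure Q := by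
    intro t ht
    rw [← YMRaux.ivl_root a] at ht
    rw [Metric.mem_closure_iff]
    intro ε hε
    obtain ⟨j, hj⟩ := (hsdtend.eventually (gt_mem_nhds (half_pos hε))).exists
    have htb := YMRaux.branch_mem ha0 hacons ht j
    have hapos : 0 < a (YMRaux.branch a t j) := by
      obtain ⟨h1, h2⟩ := htb
      linarith
    have hQcube : (YMRaux.cube S (YMRaux.branch a t j) ∩ Q).Nonempty := by
      by_contra hemp
      rw [Set.not_nonempty_iff_eq_empty] at hemp
      have hzero : ∀ k, (σm (nk k) (YMRaux.cube S (YMRaux.branch a t j))).toReal = 0 := by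
        intro k
        rw [hσap _ _ (YMRaux.measurableSet_cube S _), hemp, setLIntegral_empty]
        rfl
      have hz2 : Filter.Tendsto
          (fun k => (σm (nk k) (YMRaux.cube S (YMRaux.branch a t j))).toReal)
          Filter.atTop (nhds 0) := by
        simp only [hzero]
        exact tendsto_const_nhds
      have := tendsto_nhds_unique (hconvw _) hz2
      rw [this] at hapos
      exact lt_irrefl 0 hapos
    obtain ⟨q, hqc, hqQ⟩ := hQcube
    refine ⟨q, hqQ, ?_⟩
    have hd1 : dist (YMRaux.glim S a t) (YMRaux.gj S a j t) ≤ Real.sqrt m * YMRaux.sd S j := by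
      rw [dist_comm]; exact YMRaux.glim_dist hS a t j
    have hd2 : dist (YMRaux.gj S a j t) q ≤ Real.sqrt m * YMRaux.sd S j := by
      have h := YMRaux.dist_le_of_mem_cube hS.le (YMRaux.gj_mem hS a j t) hqc
      rwa [YMRaux.branch_length] at h
    calc dist (YMRaux.glim S a t) q ≤ dist (YMRaux.glim S a t) (YMRaux.gj S a j t) +
          dist (YMRaux.gj S a j t) q := dist_triangle _ _ _
      _ ≤ Real.sqrt m * YMRaux.sd S j + Real.sqrt m * YMRaux.sd S j := add_le_add hd1 hd2
      _ < ε / 2 + ε / 2 := add_lt_add hj hj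
      _ = ε := by ring
  have hσlim_supp : σlim (closure Q)ᶜ = 0 := by
    rw [hσlim_ap _ isClosed_closure.measurableSet.compl]
    have h1 : (YMRaux.glim S a ⁻¹' (closure Q)ᶜ) ∩ Set.Ico (0:ℝ) M = ∅ := by
      rw [Set.eq_empty_iff_forall_notMem]
      rintro t ⟨ht1, ht2⟩
      exact ht1 (hglim_mem t ht2)
    rw [h1]
    exact measure_empty
  -- the density measure ρm
  set ρm : Measure (EuclideanSpace ℝ (Fin m)) := (volume.restrict Q).withDensity φbar
    with hρmdef
  haveI hρmfin : IsFiniteMeasure ρm := by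
    refine ⟨?_⟩
    rw [hρmdef, withDensity_apply _ MeasurableSet.univ, Measure.restrict_univ]
    exact lt_of_le_of_lt hφbar_lint hCfin
  have hρQc : ρm Qᶜ = 0 := by
    rw [hρmdef, withDensity_apply _ hQm.compl, Measure.restrict_restrict hQm.compl,
      Set.compl_inter_self, Measure.restrict_empty, lintegral_zero_measure]
  -- integrability of φ(F n) on Q
  have hφFint : ∀ n, Integrable (fun z => φ z (F n z)) (volume.restrict Q) := by
    intro n
    have h1 := integrable_toReal_of_lintegral_ne_top
      ((hφF n).ennreal_ofReal).aemeasurable (lt_of_le_of_lt (hCb n) hCfin).ne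
    refine h1.congr (Filter.Eventually.of_forall fun z => ?_)
    show (ENNReal.ofReal (φ z (F n z))).toReal = φ z (F n z)
    rw [ENNReal.toReal_ofReal (hφpos _ _)]
  -- the fundamental inequality ρm ≤ σlim
  have hlintle : ∀ ψ : EuclideanSpace ℝ (Fin m) → ℝ, Continuous ψ → (∀ z, 0 ≤ ψ z) →
      (∫⁻ z, ENNReal.ofReal (ψ z) ∂ρm) ≤ ∫⁻ z, ENNReal.ofReal (ψ z) ∂σlim := by
    intro ψ hψ hψ0
    obtain ⟨Kψ, hKψ⟩ := hBcompact.exists_bound_of_continuousOn hψ.continuousOn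
    have hψQint : Integrable ψ (volume.restrict Q) := by
      refine Integrable.mono' (integrable_const Kψ) hψ.aestronglyMeasurable ?_
      filter_upwards [ae_restrict_mem hQm] with z hz
      exact hKψ z (hQB hz)
    have hψglim_int : Integrable (fun t => ψ (YMRaux.glim S a t))
        (volume.restrict (Set.Ico (0:ℝ) M)) := by
      haveI : IsFiniteMeasure (volume.restrict (Set.Ico (0:ℝ) M)) := by
        refine ⟨?_⟩
        rw [Measure.restrict_apply_univ, Real.volume_Ico]
        exact ENNReal.ofReal_lt_top
      refine Integrable.mono' (integrable_const Kψ)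
        (hψ.measurable.comp hglimmeas).aestronglyMeasurable ?_
      refine Filter.Eventually.of_forall fun t => ?_
      exact hKψ _ (mem_closedBall_zero_iff.mpr (YMRaux.glim_norm_le hS t))
    -- step a : for each R, ∫_Q gR ψ ≤ ∫ ψ(glim)
    have hstepa : ∀ R : ℕ, (∫ z in Q, (∫ lam, min (φ z lam) (R:ℝ) ∂(ν z)) * ψ z) ≤
        ∫ t in Set.Ico (0:ℝ) M, ψ (YMRaux.glim S a t) := by
      intro R
      have hA : Filter.Tendsto (fun k => ∫ z in Q, min (φ z (F (nk k) z)) (R:ℝ) * ψ z)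
          Filter.atTop (nhds (∫ z in Q, (∫ lam, min (φ z lam) (R:ℝ) ∂(ν z)) * ψ z)) :=
        (hY R ψ hψQint).comp hnkmono.tendsto_atTop
      have hB := key ψ hψ
      refine le_of_tendsto_of_tendsto' hA hB fun k => ?_
      rw [hwd (nk k) ψ]
      have hi2 : Integrable (fun z => φ z (F (nk k) z) * ψ z) (volume.restrict Q) := by
        refine Integrable.mono' ((hφFint (nk k)).const_mul Kψ)
          (((hφF (nk k)).mul hψ.measurable).aestronglyMeasurable) ?_
        filter_upwards [ae_restrict_mem hQm] with z hz
        rw [Real.norm_eq_abs, abs_mul, abs_of_nonneg (hφpos _ _)]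
        calc φ z (F (nk k) z) * |ψ z| ≤ φ z (F (nk k) z) * Kψ := by
              refine mul_le_mul_of_nonneg_left ?_ (hφpos _ _)
              rw [← Real.norm_eq_abs]
              exact hKψ z (hQB hz)
          _ = Kψ * φ z (F (nk k) z) := by ring
      have hi1 : Integrable (fun z => min (φ z (F (nk k) z)) (R:ℝ) * ψ z)
          (volume.restrict Q) := by
        refine Integrable.mono' (hψQint.abs.const_mul R)
          (((hφF (nk k)).min measurable_const).mul hψ.measurable).aestronglyMeasurable ?_
        refine Filter.Eventually.of_forall fun z => ?_
        rw [Real.norm_eq_abs, abs_mul]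
        refine mul_le_mul_of_nonneg_right ?_ (abs_nonneg _)
        rw [abs_of_nonneg (le_min (hφpos _ _) (Nat.cast_nonneg R))]
        exact min_le_right _ _
      refine integral_mono hi1 hi2 fun z => ?_
      exact mul_le_mul_of_nonneg_right (min_le_left _ _) (hψ0 z)
    -- step b : lintegral chain
    have hb1 : (∫⁻ z, ENNReal.ofReal (ψ z) ∂ρm) =
        ∫⁻ z in Q, φbar z * ENNReal.ofReal (ψ z) := by
      rw [hρmdef, lintegral_withDensity_eq_lintegral_mul _ hφbar_meas
        hψ.measurable.ennreal_ofReal]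
      rfl
    have hb2 : (∫⁻ z in Q, φbar z * ENNReal.ofReal (ψ z)) = ⨆ R : ℕ,
        ∫⁻ z in Q, ENNReal.ofReal (∫ lam, min (φ z lam) (R:ℝ) ∂(ν z)) * ENNReal.ofReal (ψ z) := by
      rw [← lintegral_iSup (fun R => (show Measurable fun z => ENNReal.ofReal (∫ lam, min (φ z lam) (R:ℝ) ∂(ν z)) * ENNReal.ofReal (ψ z) from ((hgRmeas R).ennreal_ofReal).mul
        hψ.measurable.ennreal_ofReal))
        (fun R R' h z => mul_le_mul_left (ENNReal.ofReal_le_ofReal (hgR_mono z h)) _)]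
      refine lintegral_congr fun z => ?_
      rw [hφbar z, ENNReal.iSup_mul]
    have hb3 : ∀ R : ℕ, (∫⁻ z in Q,
        ENNReal.ofReal (∫ lam, min (φ z lam) (R:ℝ) ∂(ν z)) * ENNReal.ofReal (ψ z)) ≤
        ∫⁻ z, ENNReal.ofReal (ψ z) ∂σlim := by
      intro R
      obtain ⟨Kψ2, hKψ2⟩ := hBcompact.exists_bound_of_continuousOn hψ.continuousOn
      have hprod_int : Integrable (fun z => (∫ lam, min (φ z lam) (R:ℝ) ∂(ν z)) * ψ z)
          (volume.restrict Q) := by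
        refine Integrable.mono' (hψQint.abs.const_mul R)
          ((hgRmeas R).mul hψ.measurable).aestronglyMeasurable ?_
        refine Filter.Eventually.of_forall fun z => ?_
        rw [Real.norm_eq_abs, abs_mul]
        refine mul_le_mul_of_nonneg_right ?_ (abs_nonneg _)
        rw [abs_of_nonneg (hgR_nonneg R z)]
        exact hgR_le R z
      have he : (∫⁻ z in Q, ENNReal.ofReal (∫ lam, min (φ z lam) (R:ℝ) ∂(ν z)) *
          ENNReal.ofReal (ψ z)) =
          ∫⁻ z in Q, ENNReal.ofReal ((∫ lam, min (φ z lam) (R:ℝ) ∂(ν z)) * ψ z) := by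
        refine lintegral_congr fun z => ?_
        rw [ENNReal.ofReal_mul (hgR_nonneg R z)]
      rw [he, ← ofReal_integral_eq_lintegral_ofReal hprod_int
        (Filter.Eventually.of_forall fun z => mul_nonneg (hgR_nonneg R z) (hψ0 z))]
      refine le_trans (ENNReal.ofReal_le_ofReal (hstepa R)) ?_
      rw [ofReal_integral_eq_lintegral_ofReal hψglim_int
        (Filter.Eventually.of_forall fun t => hψ0 _)]
      rw [hσlimdef, lintegral_map hψ.measurable.ennreal_ofReal hglimmeas]
    rw [hb1, hb2]
    exact iSup_le hb3
  -- open sets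
  have hopen : ∀ U : Set (EuclideanSpace ℝ (Fin m)), IsOpen U → ρm U ≤ σlim U := by
    intro U hU
    by_cases hUc : Uᶜ = ∅
    · have hUuniv : U = Set.univ := by
        rw [← Set.compl_empty_iff]; exact hUc
      subst hUuniv
      have h1 := hlintle (fun _ => 1) continuous_const (fun _ => zero_le_one)
      simpa [lintegral_one] using h1
    · have hUcne : (Uᶜ).Nonempty := Set.nonempty_iff_ne_empty.mpr hUc
      set ψn : ℕ → EuclideanSpace ℝ (Fin m) → ℝ :=
        fun n x => min 1 (n * Metric.infDist x Uᶜ) with hψndef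
      have hψncont : ∀ n, Continuous (ψn n) :=
        fun n => continuous_const.min (continuous_const.mul (Metric.continuous_infDist_pt _))
      have hψn0 : ∀ n x, 0 ≤ ψn n x := fun n x =>
        le_min zero_le_one (mul_nonneg (Nat.cast_nonneg n) Metric.infDist_nonneg)
      have hψnmono : ∀ x, Monotone fun n => ENNReal.ofReal (ψn n x) := by
        intro x n n' h
        refine ENNReal.ofReal_le_ofReal (min_le_min le_rfl ?_)
        exact mul_le_mul_of_nonneg_right (Nat.cast_le.mpr h) Metric.infDist_nonneg
      have hψntend : ∀ x, Filter.Tendsto (fun n => ENNReal.ofReal (ψn n x)) Filter.atTop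
          (nhds (U.indicator (1 : EuclideanSpace ℝ (Fin m) → ℝ≥0∞) x)) := by
        intro x
        by_cases hx : x ∈ U
        · have hd : 0 < Metric.infDist x Uᶜ :=
            (hU.isClosed_compl.notMem_iff_infDist_pos hUcne).mp (by simpa using hx)
          obtain ⟨N, hN⟩ := exists_nat_ge (1 / Metric.infDist x Uᶜ)
          rw [Set.indicator_of_mem hx, Pi.one_apply]
          refine tendsto_atTop_of_eventually_const (i₀ := N) fun n hn => ?_
          have h1 : (1:ℝ) ≤ n * Metric.infDist x Uᶜ := by
            rw [ge_iff_le] at hn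
            have h2 : (1:ℝ)/Metric.infDist x Uᶜ ≤ (n:ℝ) := hN.trans (Nat.cast_le.mpr hn)
            calc (1:ℝ) = (1 / Metric.infDist x Uᶜ) * Metric.infDist x Uᶜ := by
                  field_simp
              _ ≤ (n:ℝ) * Metric.infDist x Uᶜ := mul_le_mul_of_nonneg_right h2 hd.le
          rw [hψndef]
          simp only [min_eq_left h1, ENNReal.ofReal_one]
        · have hd : Metric.infDist x Uᶜ = 0 := Metric.infDist_zero_of_mem (by simpa using hx)
          rw [Set.indicator_of_notMem hx]
          have : ∀ n : ℕ, ENNReal.ofReal (ψn n x) = 0 := by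
            intro n
            rw [hψndef]
            simp [hd]
          simp only [this]
          exact tendsto_const_nhds
      have hρU : Filter.Tendsto (fun n => ∫⁻ z, ENNReal.ofReal (ψn n z) ∂ρm) Filter.atTop
          (nhds (ρm U)) := by
        have h1 := lintegral_tendsto_of_tendsto_of_monotone (μ := ρm)
          (fun n => ((hψncont n).measurable.ennreal_ofReal).aemeasurable)
          (Filter.Eventually.of_forall hψnmono)
          (Filter.Eventually.of_forall hψntend)
        rwa [lintegral_indicator_one hU.measurableSet] at h1
      have hσU : Filter.Tendsto (fun n => ∫⁻ z, ENNReal.ofReal (ψn n z) ∂σlim) Filter.atTop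
          (nhds (σlim U)) := by
        have h1 := lintegral_tendsto_of_tendsto_of_monotone (μ := σlim)
          (fun n => ((hψncont n).measurable.ennreal_ofReal).aemeasurable)
          (Filter.Eventually.of_forall hψnmono)
          (Filter.Eventually.of_forall hψntend)
        rwa [lintegral_indicator_one hU.measurableSet] at h1
      exact le_of_tendsto_of_tendsto' hρU hσU fun n => hlintle (ψn n) (hψncont n) (hψn0 n)
  have hρle : ρm ≤ σlim := by
    rw [Measure.le_iff]
    intro s hs
    by_contra hlt
    push_neg at hlt
    obtain ⟨U, hsU, hUopen, hUlt⟩ := Set.exists_isOpen_lt_of_lt s _ hlt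
    exact absurd ((measure_mono hsU).trans (hopen U hUopen)) (not_le.mpr hUlt)
  -- the concentration measure
  set μc : Measure (EuclideanSpace ℝ (Fin m)) := σlim - ρm with hμcdef
  have hsum : μc + ρm = σlim := Measure.sub_add_cancel_of_le hρle
  have hμcle : μc ≤ σlim := Measure.sub_le
  haveI hμcfin : IsFiniteMeasure μc :=
    ⟨lt_of_le_of_lt (Measure.le_iff'.mp hμcle Set.univ) (measure_lt_top σlim _)⟩
  have hμcsupp : μc (closure Q)ᶜ = 0 :=
    le_antisymm (le_trans (Measure.le_iff'.mp hμcle _) hσlim_supp.le) zero_le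
  have hμcQc : μc Qᶜ ≤ σlim Qᶜ := Measure.le_iff'.mp hμcle _
  -- ∫ ψ dρm
  have hρint : ∀ ψ : EuclideanSpace ℝ (Fin m) → ℝ,
      (∫ z, ψ z ∂ρm) = ∫ z in Q, (φbar z).toReal * ψ z := by
    intro ψ
    have hae : φbar =ᵐ[volume.restrict Q] fun z => ((φbar z).toNNReal : ℝ≥0∞) :=
      conc1.mono fun z hz => (ENNReal.coe_toNNReal hz.ne).symm
    have h1 : ρm = (volume.restrict Q).withDensity fun z => ((φbar z).toNNReal : ℝ≥0∞) := by
      rw [hρmdef]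
      exact withDensity_congr_ae hae
    rw [h1, integral_withDensity_eq_integral_smul hφbar_meas.ennreal_toNNReal ψ]
    refine integral_congr_ae (Filter.Eventually.of_forall fun z => ?_)
    simp only [NNReal.smul_def]
    rfl
  -- finish
  refine ⟨conc1, conc2, nk, hnkmono, μc, hμcfin, hμcsupp, ?_⟩
  intro ψ hψ
  obtain ⟨Kψ, hKψ⟩ := hBcompact.exists_bound_of_continuousOn hψ.continuousOn
  have hψμc : Integrable ψ μc := by
    refine Integrable.mono' (integrable_const Kψ) hψ.aestronglyMeasurable ?_
    have hae : ∀ᵐ z ∂μc, z ∈ closure Q := mem_ae_iff.mpr hμcsupp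
    filter_upwards [hae] with z hz
    exact hKψ z (hclQB hz)
  have hψρ : Integrable ψ ρm := by
    refine Integrable.mono' (integrable_const Kψ) hψ.aestronglyMeasurable ?_
    have hae : ∀ᵐ z ∂ρm, z ∈ Q := mem_ae_iff.mpr hρQc
    filter_upwards [hae] with z hz
    exact hKψ z (hQB hz)
  have hlimeq : ((∫ z in Q, (φbar z).toReal * ψ z) + ∫ x, ψ x ∂μc) =
      ∫ t in Set.Ico (0:ℝ) M, ψ (YMRaux.glim S a t) := by
    rw [← hIglim_eq ψ hψ, ← hsum, integral_add_measure hψμc hψρ, hρint ψ]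
    ring
  have h1 := key ψ hψ
  rw [← hlimeq] at h1
  refine h1.congr fun k => ?_
  exact hwd (nk k) ψ
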